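/- Suppose μ is a finite measure on E, f: E → ℝ is measurable, and there exist ε > 1/3 and C > 0 such that μ({x ∈ E : |f(x)| < t}) ≤ C·t^ε for all 0 < t < 1/2. Then there is a constant C' such that for all λ ≥ 2, ∫_E min(1, (λ·|f(x)|)^{-1/3}) dμ ≤ C'·λ^{-1/3}. -/

import Mathlib

open MeasureTheory

set_option maxHeartbeats 1600000 in
/-- The case ε > 1/3 of the computation (5.7)-(5.12): a sublevel set estimate
`μ({|f| < t}) ≤ C t^ε` with `ε > 1/3` implies
`∫ min(1, (λ|f|)^{-1/3}) dμ ≤ C' λ^{-1/3}` for λ ≥ 2. -/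
theorem stmt_5 {α : Type*} [MeasurableSpace α] (μ : Measure α) [IsFiniteMeasure μ]
    (f : α → ℝ) (hf : Measurable f) (ε C : ℝ)
    (hε : 1 / 3 < ε) (hC : 0 < C)
    (hlev : ∀ t : ℝ, 0 < t → t < 1 / 2 → (μ {x | |f x| < t}).toReal ≤ C * t ^ ε) :
    ∃ C' > (0 : ℝ), ∀ lam : ℝ, 2 ≤ lam →
      (∫ x, min 1 ((lam * |f x|) ^ (-(1 / 3 : ℝ))) ∂μ) ≤ C' * lam ^ (-(1 / 3 : ℝ)) := by
  have h3ε : (0:ℝ) < 3 * ε - 1 := by linarith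
  set M : ℝ := (μ Set.univ).toReal with hMdef
  have hM0 : 0 ≤ M := ENNReal.toReal_nonneg
  set q : ℝ := 1 - 3 * ε with hq
  refine ⟨M * 2 ^ ((1:ℝ)/3) + C * 2 ^ ((1:ℝ)/3 * q) / (3 * ε - 1) + 1, ?_, ?_⟩
  · have h1 : 0 < C * 2 ^ ((1:ℝ)/3 * q) / (3 * ε - 1) := by
      apply div_pos _ h3ε
      positivity
    have h2 : 0 ≤ M * 2 ^ ((1:ℝ)/3) := by positivity
    linarith
  intro lam hlam
  have hlam0 : (0:ℝ) < lam := by linarith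
  set L : ℝ := lam ^ (-(1/3 : ℝ)) with hL
  have hL0 : 0 < L := Real.rpow_pos_of_pos hlam0 _
  set g : α → ℝ := fun x => min 1 ((lam * |f x|) ^ (-(1 / 3 : ℝ))) with hg
  have hg_nonneg : ∀ x, 0 ≤ g x := by
    intro x
    exact le_min one_pos.le (Real.rpow_nonneg (by positivity) _)
  have hg_le_one : ∀ x, g x ≤ 1 := fun x => min_le_left _ _
  have hg_meas : Measurable g :=
    measurable_const.min ((measurable_const.mul hf.abs).pow measurable_const)
  have hg_int : Integrable g μ := by
    refine Integrable.mono' (integrable_const (1:ℝ)) hg_meas.aestronglyMeasurable ?_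
    exact Filter.Eventually.of_forall fun x => by
      rw [Real.norm_eq_abs, abs_of_nonneg (hg_nonneg x)]; exact hg_le_one x
  -- layer cake
  have hlayer := hg_int.integral_eq_integral_meas_lt (Filter.Eventually.of_forall hg_nonneg)
  set F : ℝ → ℝ := fun t => (μ {a | t < g a}).toReal with hF
  -- basic properties of F
  have hF_anti : Antitone F := by
    intro s t hst
    exact ENNReal.toReal_mono (measure_ne_top μ _)
      (measure_mono fun a ha => lt_of_le_of_lt hst ha)
  have hF_meas : Measurable F := hF_anti.measurable
  have hF_nonneg : ∀ t, 0 ≤ F t := fun t => ENNReal.toReal_nonneg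
  have hF_le_M : ∀ t, F t ≤ M :=
    fun t => ENNReal.toReal_mono (measure_ne_top μ _) (measure_mono (Set.subset_univ _))
  have hF_zero : ∀ t : ℝ, 1 ≤ t → F t = 0 := by
    intro t ht
    have : {a | t < g a} = ∅ := by
      ext a; simp only [Set.mem_setOf_eq, Set.mem_empty_iff_false, iff_false, not_lt]
      exact (hg_le_one a).trans ht
    simp [hF, this]
  -- threshold
  set s₀ : ℝ := 2 ^ ((1:ℝ)/3) * L with hs₀
  have hs₀0 : 0 < s₀ := by positivity
  have hs₀3 : s₀ ^ (3:ℕ) = 2 / lam := by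
    rw [hs₀, mul_pow, ← Real.rpow_natCast (2 ^ ((1:ℝ)/3)) 3, ← Real.rpow_natCast (L) 3,
      hL, ← Real.rpow_mul (by norm_num : (0:ℝ) ≤ 2), ← Real.rpow_mul hlam0.le]
    norm_num
    rw [Real.rpow_neg_one]
    ring
  have hs₀1 : s₀ ≤ 1 := by
    have h2lam : 2 / lam ≤ 1 := by
      rw [div_le_one hlam0]; exact hlam
    nlinarith [hs₀0, sq_nonneg (s₀ - 1), sq_nonneg (s₀ + 1)]
  -- key subset bound
  have hsub : ∀ t : ℝ, 0 < t → {a | t < g a} ⊆ {x | |f x| < (lam * t ^ (3:ℕ))⁻¹} := by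
    intro t ht a ha
    have h1 : t < (lam * |f a|) ^ (-(1/3 : ℝ)) :=
      lt_of_lt_of_le ha (min_le_right _ _)
    set b : ℝ := lam * |f a| with hb
    have hb0 : 0 ≤ b := by positivity
    have hbpos : 0 < b := by
      rcases hb0.lt_or_eq with h | h
      · exact h
      · exfalso; rw [← h, Real.zero_rpow (by norm_num)] at h1; linarith
    have hpow : (b ^ (-(1/3 : ℝ))) ^ (3:ℕ) = b⁻¹ := by
      rw [← Real.rpow_natCast (b ^ (-(1/3:ℝ))) 3, ← Real.rpow_mul hb0]
      norm_num
      exact Real.rpow_neg_one b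
    have h2 : t ^ (3:ℕ) < b⁻¹ := by
      rw [← hpow]
      exact pow_lt_pow_left₀ h1 ht.le (by norm_num)
    have h3 : b * t ^ (3:ℕ) < 1 := by
      have := mul_lt_mul_of_pos_left h2 hbpos
      rwa [mul_inv_cancel₀ hbpos.ne'] at this
    have ht3 : 0 < t ^ (3:ℕ) := pow_pos ht 3
    have hlt3 : 0 < lam * t ^ (3:ℕ) := by positivity
    have hinv : (lam * t ^ (3:ℕ)) * (lam * t ^ (3:ℕ))⁻¹ = 1 := mul_inv_cancel₀ hlt3.ne'
    show |f a| < (lam * t ^ (3:ℕ))⁻¹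
    nlinarith [abs_nonneg (f a), h3, hinv, hlt3, inv_pos.mpr hlt3]
  -- bound on F on (s₀, 1]
  have hkey : ∀ t ∈ Set.Ioc s₀ 1, F t ≤ C * lam ^ (-ε) * t ^ (-(3*ε)) := by
    intro t ht
    obtain ⟨hts, ht1⟩ := ht
    have ht0 : 0 < t := lt_trans hs₀0 hts
    set u : ℝ := (lam * t ^ (3:ℕ))⁻¹ with hu
    have hu0 : 0 < u := by positivity
    have hu_half : u < 1 / 2 := by
      have h1 : s₀ ^ (3:ℕ) < t ^ (3:ℕ) := pow_lt_pow_left₀ hts hs₀0.le (by norm_num)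
      have h2 : (2:ℝ) < lam * t ^ (3:ℕ) := by
        rw [hs₀3] at h1
        calc (2:ℝ) = lam * (2 / lam) := by field_simp
        _ < lam * t ^ (3:ℕ) := by exact mul_lt_mul_of_pos_left h1 hlam0
      rw [hu, lt_div_iff₀ (by norm_num : (0:ℝ) < 2)]
      rw [inv_mul_lt_iff₀ (by positivity)]
      linarith
    have hFu : F t ≤ (μ {x | |f x| < u}).toReal :=
      ENNReal.toReal_mono (measure_ne_top μ _) (measure_mono (hsub t ht0))
    have hlevu := hlev u hu0 hu_half
    have hueq : C * u ^ ε = C * lam ^ (-ε) * t ^ (-(3*ε)) := by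
      have e1 : u ^ ε = lam ^ (-ε) * t ^ (-(3*ε)) := by
        rw [hu, Real.inv_rpow (by positivity), Real.mul_rpow hlam0.le (by positivity),
          ← Real.rpow_natCast t 3, ← Real.rpow_mul ht0.le, mul_inv,
          ← Real.rpow_neg hlam0.le, ← Real.rpow_neg ht0.le]
        norm_num
      rw [e1]; ring
    calc F t ≤ (μ {x | |f x| < u}).toReal := hFu
    _ ≤ C * u ^ ε := hlevu
    _ = C * lam ^ (-ε) * t ^ (-(3*ε)) := hueq
  -- integrability facts
  have hF_sm : AEStronglyMeasurable F (volume : Measure ℝ) := hF_meas.aestronglyMeasurable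
  have hFint01 : IntegrableOn F (Set.Ioc 0 1) volume := by
    refine Measure.integrableOn_of_bounded (M := M) (by simp) hF_sm ?_
    refine Filter.Eventually.of_forall fun t => ?_
    rw [Real.norm_eq_abs, abs_of_nonneg (hF_nonneg t)]
    exact hF_le_M t
  have hFintA : IntegrableOn F (Set.Ioc 0 s₀) volume :=
    hFint01.mono_set (Set.Ioc_subset_Ioc_right hs₀1)
  have hFintB : IntegrableOn F (Set.Ioc s₀ 1) volume :=
    hFint01.mono_set (Set.Ioc_subset_Ioc_left hs₀0.le)
  have hFintI1 : IntegrableOn F (Set.Ioi 1) volume := by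
    apply (integrableOn_congr_fun (g := F) (fun x hx => (hF_zero x (le_of_lt hx)).symm)
      measurableSet_Ioi).mp
    exact integrableOn_zero
  -- split the integral
  have hsplit1 : ∫ t in Set.Ioi (0:ℝ), F t = ∫ t in Set.Ioc (0:ℝ) 1, F t := by
    rw [← Set.Ioc_union_Ioi_eq_Ioi (by norm_num : (0:ℝ) ≤ 1),
      setIntegral_union (Set.Ioc_disjoint_Ioi le_rfl) measurableSet_Ioi hFint01 hFintI1]
    have h0 : ∫ t in Set.Ioi (1:ℝ), F t = 0 :=
      setIntegral_eq_zero_of_forall_eq_zero fun x hx => hF_zero x (le_of_lt hx)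
    rw [h0, add_zero]
  have hsplit2 : ∫ t in Set.Ioc (0:ℝ) 1, F t
      = (∫ t in Set.Ioc 0 s₀, F t) + ∫ t in Set.Ioc s₀ 1, F t := by
    rw [← Set.Ioc_union_Ioc_eq_Ioc hs₀0.le hs₀1,
      setIntegral_union (Set.Ioc_disjoint_Ioc_of_le le_rfl) measurableSet_Ioc hFintA hFintB]
  -- bound piece A
  have hA : ∫ t in Set.Ioc 0 s₀, F t ≤ M * s₀ := by
    calc ∫ t in Set.Ioc 0 s₀, F t ≤ ∫ t in Set.Ioc 0 s₀, M := by
          refine setIntegral_mono_on hFintA ((integrableOn_const_iff).mpr (Or.inr (by simp)))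
            measurableSet_Ioc fun t _ => hF_le_M t
    _ = M * s₀ := by
          rw [setIntegral_const, measureReal_def, Real.volume_Ioc, smul_eq_mul,
            ENNReal.toReal_ofReal (by linarith)]
          ring
  -- integrability of the comparison function
  have hcont : ContinuousOn (fun t : ℝ => C * lam ^ (-ε) * t ^ (-(3*ε))) (Set.Icc s₀ 1) := by
    apply ContinuousOn.mul continuousOn_const
    intro t ht
    exact (Real.continuousAt_rpow_const t _ (Or.inl (by
      intro h; rw [h] at ht; exact absurd ht.1 (not_le.mpr hs₀0)))).continuousWithinAt
  have hintB : IntegrableOn (fun t : ℝ => C * lam ^ (-ε) * t ^ (-(3*ε))) (Set.Ioc s₀ 1)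
      volume :=
    (hcont.integrableOn_Icc).mono_set Set.Ioc_subset_Icc_self
  -- bound piece B
  have hBval : ∫ t in Set.Ioc s₀ 1, (fun t : ℝ => C * lam ^ (-ε) * t ^ (-(3*ε))) t
      = C * lam ^ (-ε) * ((1 - s₀ ^ (-(3*ε) + 1)) / (-(3*ε) + 1)) := by
    rw [← intervalIntegral.integral_of_le hs₀1]
    rw [intervalIntegral.integral_const_mul]
    rw [integral_rpow (Or.inr ⟨by intro h; linarith, by
      rw [Set.uIcc_of_le hs₀1]; intro h; exact absurd h.1 (not_le.mpr hs₀0)⟩)]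
    rw [Real.one_rpow]
  have hB : ∫ t in Set.Ioc s₀ 1, F t
      ≤ C * lam ^ (-ε) * (s₀ ^ (-(3*ε) + 1) / (3 * ε - 1)) := by
    calc ∫ t in Set.Ioc s₀ 1, F t
        ≤ ∫ t in Set.Ioc s₀ 1, C * lam ^ (-ε) * t ^ (-(3*ε)) := by
          exact setIntegral_mono_on hFintB hintB measurableSet_Ioc hkey
    _ = C * lam ^ (-ε) * ((1 - s₀ ^ (-(3*ε) + 1)) / (-(3*ε) + 1)) := hBval
    _ ≤ C * lam ^ (-ε) * (s₀ ^ (-(3*ε) + 1) / (3 * ε - 1)) := by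
          apply mul_le_mul_of_nonneg_left _ (by positivity)
          have hspos : 0 < s₀ ^ (-(3*ε) + 1) := Real.rpow_pos_of_pos hs₀0 _
          have e : (1 - s₀ ^ (-(3*ε) + 1)) / (-(3*ε) + 1)
              = (s₀ ^ (-(3*ε) + 1) - 1) / (3*ε - 1) := by
            have hne : (3*ε - 1) ≠ 0 := ne_of_gt h3ε
            have hne2 : (-(3*ε) + 1) ≠ 0 := by intro h; linarith
            field_simp
            ring
          rw [e, div_le_div_iff₀ h3ε h3ε]
          nlinarith
  -- compute s₀ ^ (-(3ε)+1)
  have hs₀q : s₀ ^ (-(3*ε) + 1) = 2 ^ ((1:ℝ)/3 * q) * lam ^ (-(1/3:ℝ) * q) := by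
    have hq' : -(3*ε) + 1 = q := by rw [hq]; ring
    rw [hq', hs₀, hL, Real.mul_rpow (by positivity) (by positivity),
      ← Real.rpow_mul (by norm_num : (0:ℝ) ≤ 2), ← Real.rpow_mul hlam0.le]
  -- combine
  have hexp : lam ^ (-ε) * lam ^ (-(1/3:ℝ) * q) = lam ^ (-(1/3:ℝ)) := by
    rw [← Real.rpow_add hlam0]
    congr 1
    rw [hq]; ring
  rw [hlayer]; change ∫ t in Set.Ioi (0:ℝ), F t ≤ _; rw [hsplit1, hsplit2]
  have htotal : (∫ t in Set.Ioc 0 s₀, F t) + ∫ t in Set.Ioc s₀ 1, F t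
      ≤ M * s₀ + C * lam ^ (-ε) * (s₀ ^ (-(3*ε) + 1) / (3 * ε - 1)) := add_le_add hA hB
  have hfinal : M * s₀ + C * lam ^ (-ε) * (s₀ ^ (-(3*ε) + 1) / (3 * ε - 1))
      = (M * 2 ^ ((1:ℝ)/3) + C * 2 ^ ((1:ℝ)/3 * q) / (3 * ε - 1)) * lam ^ (-(1/3:ℝ)) := by
    rw [hs₀q, hs₀, hL]
    linear_combination (C * 2 ^ ((1:ℝ)/3 * q) / (3 * ε - 1)) * hexp
  calc (∫ t in Set.Ioc 0 s₀, F t) + ∫ t in Set.Ioc s₀ 1, F t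
      ≤ (M * 2 ^ ((1:ℝ)/3) + C * 2 ^ ((1:ℝ)/3 * q) / (3 * ε - 1)) * lam ^ (-(1/3:ℝ)) := by
        rw [← hfinal]; exact htotal
  _ ≤ (M * 2 ^ ((1:ℝ)/3) + C * 2 ^ ((1:ℝ)/3 * q) / (3 * ε - 1) + 1) * lam ^ (-(1/3:ℝ)) := by
        have : (0:ℝ) < lam ^ (-(1/3:ℝ)) := Real.rpow_pos_of_pos hlam0 _
        nlinarith
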